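/- Let X be an (n+1)-partite pure n-dimensional weighted simplicial complex with sides S_0,…,S_n. For any φ ∈ C^0(X,ℝ) and 0 ≤ i ≤ n, define φ_{i}(u) = -n·φ(u) for u ∈ S_i and φ_{i}(u) = φ(u) otherwise. Then Σ_{i=0}^n ‖φ_{i}‖² = (n²+n)‖φ‖², and Σ_{i=0}^n ⟨φ_{i}, Δ_0^+ φ_{i}⟩ = ⟨φ, ((n+1)² I - (n+1) Δ_0^+) φ⟩. -/

import Mathlib

open Finset

open scoped Classical

/-- `X` is (the face set of) an abstract simplicial complex: downward closed. -/
def IsSC {V : Type*} [DecidableEq V] (X : Finset (Finset V)) : Prop :=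
  ∀ s ∈ X, ∀ t ⊆ s, t ∈ X

/-- `X` is pure `n`-dimensional: every face is contained in a face of cardinality `n+1`. -/
def IsPure {V : Type*} [DecidableEq V] (X : Finset (Finset V)) (n : ℕ) : Prop :=
  ∀ s ∈ X, ∃ t ∈ X, s ⊆ t ∧ t.card = n + 1

/-- A weight function on a pure `n`-dimensional complex `X`. -/
def IsWeight {V : Type*} [DecidableEq V] (X : Finset (Finset V)) (n : ℕ) (m : Finset V → ℝ) :
    Prop :=
  (∀ s ∈ X, 0 < m s) ∧
  ∀ s ∈ X, s.card ≤ n →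
    m s = ∑ t ∈ X.filter (fun t => s ⊆ t ∧ t.card = s.card + 1), m t

/-- An ordered simplex of `X` with `a` vertices (an ordered `(a-1)`-simplex, element of
`Σ(a-1)`): an injective tuple whose image is a face of `X`. -/
def OSimp {V : Type*} [Fintype V] [DecidableEq V] (X : Finset (Finset V)) {a : ℕ}
    (f : Fin a → V) : Prop :=
  Function.Injective f ∧ Finset.image f Finset.univ ∈ X

/-- A `(a-1)`-form: an antisymmetric real function on ordered tuples. -/
def IsForm {V : Type*} {a : ℕ} (φ : (Fin a → V) → ℝ) : Prop :=
  ∀ (f : Fin a → V) (π : Equiv.Perm (Fin a)),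
    φ (f ∘ π) = ((Equiv.Perm.sign π : ℤ) : ℝ) * φ f

/-- The weighted inner product `⟨φ,ψ⟩ = Σ_{f ∈ Σ(a-1)} (m(f)/a!) φ(f) ψ(f)` on
`(a-1)`-forms. -/
noncomputable def formIP {V : Type*} [Fintype V] [DecidableEq V] (X : Finset (Finset V))
    (m : Finset V → ℝ) {a : ℕ} (φ ψ : (Fin a → V) → ℝ) : ℝ :=
  ∑ f : Fin a → V,
    if OSimp X f then (m (Finset.image f Finset.univ) / (Nat.factorial a : ℝ)) * (φ f * ψ f)
    else 0

/-- The simplicial differential `d : C^{a-1} → C^a`. -/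
def dOp {V : Type*} {a : ℕ} (φ : (Fin a → V) → ℝ) : (Fin (a + 1) → V) → ℝ :=
  fun f => ∑ i : Fin (a + 1), (-1 : ℝ) ^ (i : ℕ) * φ (fun j => f (i.succAbove j))

/-- The codifferential `δ : C^a → C^{a-1}`, given by
`(δφ)(τ) = Σ_{v : vτ ∈ Σ(a)} (m(vτ)/m(τ)) φ(vτ)`. -/
noncomputable def deltaOp {V : Type*} [Fintype V] [DecidableEq V] (X : Finset (Finset V))
    (m : Finset V → ℝ) {a : ℕ} (φ : (Fin (a + 1) → V) → ℝ) : (Fin a → V) → ℝ :=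
  fun τ => ∑ v : V,
    if OSimp X (Fin.cons v τ : Fin (a + 1) → V) then
      (m (Finset.image (Fin.cons v τ : Fin (a + 1) → V) Finset.univ) /
        m (Finset.image τ Finset.univ)) * φ (Fin.cons v τ)
    else 0

/-- The vertices of the link of the face `τ`. -/
def linkVerts {V : Type*} [Fintype V] [DecidableEq V] (X : Finset (Finset V)) (τ : Finset V) :
    Finset V :=
  Finset.univ.filter (fun v => v ∉ τ ∧ insert v τ ∈ X)

/-- The upper `0`-Laplacian `Δ⁺_{τ,0}` of the link of the face `τ`, with the induced weight
`m_τ(σ) = m(τ ∪ σ)`:  `Δ⁺φ(u) = φ(u) - Σ_{v : {u,v} ∈ X_τ} (m_τ({u,v})/m_τ({u})) φ(v)`. -/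
noncomputable def linkLap {V : Type*} [Fintype V] [DecidableEq V] (X : Finset (Finset V))
    (m : Finset V → ℝ) (τ : Finset V) (φ : V → ℝ) : V → ℝ :=
  fun u => φ u -
    ∑ v ∈ Finset.univ.filter (fun v => v ∉ insert u τ ∧ insert v (insert u τ) ∈ X),
      (m (insert v (insert u τ)) / m (insert u τ)) * φ v

/-- `μ` is an eigenvalue of the upper `0`-Laplacian of the link of `τ`. -/
def linkEig {V : Type*} [Fintype V] [DecidableEq V] (X : Finset (Finset V)) (m : Finset V → ℝ)
    (τ : Finset V) (μ : ℝ) : Prop :=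
  ∃ φ : V → ℝ, (∀ v, v ∉ linkVerts X τ → φ v = 0) ∧ (∃ u ∈ linkVerts X τ, φ u ≠ 0) ∧
    ∀ u ∈ linkVerts X τ, linkLap X m τ φ u = μ * φ u

/-- The link of the face `τ` is a connected: any two of its vertices are joined by a path of
edges of the link. -/
def linkConn {V : Type*} [Fintype V] [DecidableEq V] (X : Finset (Finset V)) (τ : Finset V) :
    Prop :=
  ∀ u ∈ linkVerts X τ, ∀ v ∈ linkVerts X τ,
    Relation.ReflTransGen
      (fun a b => a ∈ linkVerts X τ ∧ b ∈ linkVerts X τ ∧ a ≠ b ∧ insert a (insert b τ) ∈ X)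
      u v

/-- The inner product on `0`-forms: `⟨φ,ψ⟩ = Σ_{v ∈ X^{(0)}} m(v) φ(v) ψ(v)`. -/
noncomputable def vertIP {V : Type*} [Fintype V] [DecidableEq V] (X : Finset (Finset V))
    (m : Finset V → ℝ) (φ ψ : V → ℝ) : ℝ :=
  ∑ v : V, if {v} ∈ X then m {v} * (φ v * ψ v) else 0

/-- Let `X` be an `(n+1)`-partite pure `n`-dimensional weighted simplicial
complex with sides `S_0,…,S_n`.  For `φ ∈ C⁰(X,ℝ)` define `φ_i` by multiplying `φ` by `-n` on
`S_i` and leaving it unchanged elsewhere.  Then `Σ_i ‖φ_i‖² = (n²+n)‖φ‖²` and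
`Σ_i ⟨φ_i, Δ₀⁺φ_i⟩ = ⟨φ, ((n+1)² I - (n+1) Δ₀⁺) φ⟩`. -/
theorem stmt19 {V : Type*} [Fintype V] [DecidableEq V] (n : ℕ) (hn : 1 ≤ n)
    (X : Finset (Finset V)) (hSC : IsSC X) (hpure : IsPure X n)
    (m : Finset V → ℝ) (hm : IsWeight X n m)
    (S : Fin (n + 1) → Finset V)
    (hdisj : ∀ i j, i ≠ j → Disjoint (S i) (S j))
    (hcover : ∀ v : V, {v} ∈ X → ∃ i, v ∈ S i)
    (hpartite : ∀ u v : V, u ≠ v → {u, v} ∈ X →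
      ∃ i j, i ≠ j ∧ u ∈ S i ∧ v ∈ S j)
    (φ : V → ℝ) (φi : Fin (n + 1) → V → ℝ)
    (hφi : ∀ i u, φi i u = if u ∈ S i then -(n : ℝ) * φ u else φ u) :
    (∑ i : Fin (n + 1), vertIP X m (φi i) (φi i) =
        ((n : ℝ) ^ 2 + n) * vertIP X m φ φ) ∧
    (∑ i : Fin (n + 1), vertIP X m (φi i) (linkLap X m ∅ (φi i)) =
        vertIP X m φ
          (fun u => ((n : ℝ) + 1) ^ 2 * φ u - ((n : ℝ) + 1) * linkLap X m ∅ φ u)) := by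
  classical
  have huniq : ∀ u : V, ∀ i j : Fin (n+1), u ∈ S i → u ∈ S j → i = j := by
    intro u i j hi hj
    by_contra h
    exact (Finset.disjoint_left.mp (hdisj i j h) hi) hj
  -- pointwise square sum
  have hsq : ∀ u : V, {u} ∈ X → ∑ i : Fin (n+1), φi i u * φi i u
      = ((n:ℝ)^2 + n) * (φ u * φ u) := by
    intro u hu
    obtain ⟨i0, hi0⟩ := hcover u hu
    rw [← Finset.sum_erase_add _ _ (Finset.mem_univ i0)]
    have h1 : ∀ i ∈ Finset.univ.erase i0, φi i u * φi i u = φ u * φ u := by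
      intro i hi
      have hni : u ∉ S i := fun h => (Finset.mem_erase.mp hi).1 (huniq u i i0 h hi0)
      rw [hφi]; simp [hni]
    rw [Finset.sum_congr rfl h1, Finset.sum_const,
      Finset.card_erase_of_mem (Finset.mem_univ i0), Finset.card_univ, Fintype.card_fin,
      Nat.add_sub_cancel, hφi, if_pos hi0, nsmul_eq_mul]
    ring
  -- pointwise cross sum
  have hcross : ∀ u v : V, ∀ j k : Fin (n+1), j ≠ k → u ∈ S j → v ∈ S k →
      ∑ i : Fin (n+1), φi i u * φi i v = -((n:ℝ)+1) * (φ u * φ v) := by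
    intro u v j k hjk hu hv
    have hk : k ∈ Finset.univ.erase j :=
      Finset.mem_erase.mpr ⟨fun h => hjk h.symm, Finset.mem_univ k⟩
    rw [← Finset.sum_erase_add _ _ (Finset.mem_univ j), ← Finset.sum_erase_add _ _ hk]
    have h1 : ∀ i ∈ (Finset.univ.erase j).erase k, φi i u * φi i v = φ u * φ v := by
      intro i hi
      have hij : i ≠ j := (Finset.mem_erase.mp (Finset.mem_erase.mp hi).2).1
      have hik : i ≠ k := (Finset.mem_erase.mp hi).1
      have h1 : u ∉ S i := fun h => hij (huniq u i j h hu)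
      have h2 : v ∉ S i := fun h => hik (huniq v i k h hv)
      rw [hφi, hφi]; simp [h1, h2]
    have hvj : v ∉ S j := fun h => hjk (huniq v j k h hv)
    have huk : u ∉ S k := fun h => hjk (huniq u j k hu h)
    rw [Finset.sum_congr rfl h1, Finset.sum_const,
      Finset.card_erase_of_mem hk, Finset.card_erase_of_mem (Finset.mem_univ j),
      Finset.card_univ, Fintype.card_fin, Nat.add_sub_cancel,
      hφi, hφi, hφi, hφi, if_pos hu, if_pos hv, if_neg hvj, if_neg huk, nsmul_eq_mul,
      Nat.cast_sub hn]
    push_cast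
    ring
  -- part 1
  have part1 : ∑ i : Fin (n + 1), vertIP X m (φi i) (φi i) =
      ((n : ℝ) ^ 2 + n) * vertIP X m φ φ := by
    unfold vertIP
    rw [Finset.sum_comm, Finset.mul_sum]
    refine Finset.sum_congr rfl fun v _ => ?_
    by_cases hv : ({v} : Finset V) ∈ X
    · simp only [if_pos hv, ← Finset.mul_sum]
      rw [hsq v hv]
      ring
    · simp [hv]
  -- expansion of the Laplacian inner product
  have hexp : ∀ ψ : V → ℝ, vertIP X m ψ (linkLap X m ∅ ψ) = vertIP X m ψ ψ -
      ∑ u : V, ∑ v : V, (if ({u} ∈ X ∧ v ∉ ({u} : Finset V) ∧ insert v {u} ∈ X) then m (insert v {u}) * (ψ u * ψ v) else 0) := by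
    intro ψ
    unfold vertIP linkLap
    rw [← Finset.sum_sub_distrib]
    refine Finset.sum_congr rfl fun u _ => ?_
    by_cases hu : ({u} : Finset V) ∈ X
    · have hmu : m {u} ≠ 0 := ne_of_gt (hm.1 _ hu)
      simp only [if_pos hu, insert_empty_eq]
      have key : m {u} * (ψ u * ∑ v ∈ Finset.univ.filter
          (fun v => v ∉ ({u} : Finset V) ∧ insert v {u} ∈ X),
          m (insert v {u}) / m {u} * ψ v)
          = ∑ v : V, (if ({u} ∈ X ∧ v ∉ ({u} : Finset V) ∧ insert v {u} ∈ X) then m (insert v {u}) * (ψ u * ψ v) else 0) := by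
        rw [Finset.mul_sum, Finset.mul_sum, Finset.sum_filter]
        refine Finset.sum_congr rfl fun v _ => ?_
        by_cases hp : v ∉ ({u} : Finset V) ∧ insert v {u} ∈ X
        · rw [if_pos hp, if_pos (⟨hu, hp⟩ : _ ∧ _)]
          field_simp
        · rw [if_neg hp, if_neg (fun h => hp h.2)]
      rw [← key]
      ring
    · simp [hu]
  -- sum over i of the cross terms
  have hDi : ∑ i : Fin (n+1), ∑ u : V, ∑ v : V, (if ({u} ∈ X ∧ v ∉ ({u} : Finset V) ∧ insert v {u} ∈ X) then m (insert v {u}) * ((φi i) u * (φi i) v) else 0)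
      = -((n:ℝ)+1) * ∑ u : V, ∑ v : V, (if ({u} ∈ X ∧ v ∉ ({u} : Finset V) ∧ insert v {u} ∈ X) then m (insert v {u}) * (φ u * φ v) else 0) := by
    rw [Finset.mul_sum, Finset.sum_comm]
    refine Finset.sum_congr rfl fun u _ => ?_
    rw [Finset.mul_sum, Finset.sum_comm]
    refine Finset.sum_congr rfl fun v _ => ?_
    by_cases hc : ({u} ∈ X ∧ v ∉ ({u} : Finset V) ∧ insert v {u} ∈ X)
    · simp only [if_pos hc, ← Finset.mul_sum]
      obtain ⟨hu, hvne, he⟩ := hc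
      have hne : u ≠ v := fun h => hvne (by simp [h])
      have hedge : ({u, v} : Finset V) ∈ X := by
        have hpair : insert v {u} = ({u, v} : Finset V) := by
          ext x; simp [or_comm]
        rwa [hpair] at he
      obtain ⟨j, k, hjk, hu', hv'⟩ := hpartite u v hne hedge
      rw [hcross u v j k hjk hu' hv']
      ring
    · simp only [if_neg hc, Finset.sum_const_zero, mul_zero]
  -- RHS linearity
  have hRHS : vertIP X m φ
      (fun u => ((n : ℝ) + 1) ^ 2 * φ u - ((n : ℝ) + 1) * linkLap X m ∅ φ u)
      = ((n:ℝ)+1)^2 * vertIP X m φ φ - ((n:ℝ)+1) * vertIP X m φ (linkLap X m ∅ φ) := by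
    unfold vertIP
    rw [Finset.mul_sum, Finset.mul_sum, ← Finset.sum_sub_distrib]
    refine Finset.sum_congr rfl fun u _ => ?_
    by_cases hu : ({u} : Finset V) ∈ X <;> simp only [if_pos, if_neg, hu, if_true, if_false] <;> ring
  refine ⟨part1, ?_⟩
  have e1 := hexp φ
  have e2 : ∑ i : Fin (n+1), vertIP X m (φi i) (linkLap X m ∅ (φi i))
      = ∑ i : Fin (n+1), (vertIP X m (φi i) (φi i) - ∑ u : V, ∑ v : V, (if ({u} ∈ X ∧ v ∉ ({u} : Finset V) ∧ insert v {u} ∈ X) then m (insert v {u}) * ((φi i) u * (φi i) v) else 0)) :=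
    Finset.sum_congr rfl fun i _ => hexp (φi i)
  rw [hRHS, e1, e2, Finset.sum_sub_distrib, part1, hDi]
  ring
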